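/- Fix integers m ≥ 1 and define g_m(n) := Γ(n/2)·exp(n/m) / (Γ(m/2)·Γ((n−m)/2)·2^{n/2}) for n > m. Then the sequence n ↦ g_m(n) is log-concave: g_m(n)^2 ≥ g_m(n−1)·g_m(n+1) for all n ≥ m+2. -/

import Mathlib

open Real

open Filter Topology

namespace GLogAux

lemma step_up {y c : ℝ} (hy : 1 ≤ y) (hc : 0 ≤ c)
    (h : Gamma (y + 1/2) ^ 4 ≤ c * (y * (y - 1/2) * Gamma y ^ 4)) :
    Gamma (y + 1 + 1/2) ^ 4 ≤ c * ((y + 1) * ((y + 1) - 1/2) * Gamma (y + 1) ^ 4) := by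
  have hy0 : (0:ℝ) < y := by linarith
  have e1 : Gamma (y + 1 + 1/2) = (y + 1/2) * Gamma (y + 1/2) := by
    rw [show y + 1 + 1/2 = (y + 1/2) + 1 by ring, Real.Gamma_add_one (by positivity)]
  have e2 : Gamma (y + 1) = y * Gamma y := by
    rw [Real.Gamma_add_one (ne_of_gt hy0)]
  have hG : 0 < Gamma y := Real.Gamma_pos_of_pos hy0
  have key : (y + 1/2)^4 * (y * (y - 1/2)) ≤ (y + 1) * ((y + 1) - 1/2) * y^4 := by
    nlinarith [hy0, sq_nonneg y, mul_pos hy0 hy0]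
  rw [e1, e2]
  calc ((y+1/2) * Gamma (y+1/2))^4 = (y+1/2)^4 * Gamma (y+1/2)^4 := by ring
    _ ≤ (y+1/2)^4 * (c * (y * (y-1/2) * Gamma y ^ 4)) := by
        apply mul_le_mul_of_nonneg_left h (by positivity)
    _ = (c * ((y+1/2)^4 * (y*(y-1/2)))) * Gamma y ^ 4 := by ring
    _ ≤ (c * ((y+1) * ((y+1) - 1/2) * y^4)) * Gamma y ^ 4 := by
        apply mul_le_mul_of_nonneg_right (mul_le_mul_of_nonneg_left key hc) (by positivity)
    _ = c * ((y+1) * ((y+1) - 1/2) * (y * Gamma y)^4) := by ring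

lemma gamma_wallis (s : ℕ) (hs : 1 ≤ s) :
    Gamma ((s : ℝ) + 1/2) ^ 2 * (2 * (s : ℝ) + 1) * Real.Wallis.W s
      = π * (s : ℝ) ^ 2 * Gamma (s : ℝ) ^ 2 := by
  induction s, hs using Nat.le_induction with
  | base =>
      have h1 : Gamma ((1 : ℝ) + 1/2) = (1/2) * Gamma (1/2) := by
        rw [show (1:ℝ) + 1/2 = 1/2 + 1 by ring, Real.Gamma_add_one (by norm_num)]
      have hW : Real.Wallis.W 1 = (2/1) * (2/3) := by
        simp [Real.Wallis.W]
      have hsq : Real.sqrt π ^ 2 = π := Real.sq_sqrt pi_pos.le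
      rw [Nat.cast_one, h1, Real.Gamma_one_half_eq, hW, Real.Gamma_one]
      nlinarith [hsq]
  | succ s hs ih =>
      have hs0 : (0:ℝ) < (s:ℝ) := by exact_mod_cast hs
      have e1 : Gamma ((↑(s+1) : ℝ) + 1/2) = ((s:ℝ) + 1/2) * Gamma ((s:ℝ) + 1/2) := by
        push_cast
        rw [show (s:ℝ) + 1 + 1/2 = ((s:ℝ) + 1/2) + 1 by ring,
          Real.Gamma_add_one (by positivity)]
      have e2 : Gamma ((↑(s+1) : ℝ)) = (s:ℝ) * Gamma (s:ℝ) := by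
        push_cast
        rw [Real.Gamma_add_one (ne_of_gt hs0)]
      have h3 : (2*(s:ℝ)+1) ≠ 0 := by positivity
      have h4 : (2*(s:ℝ)+3) ≠ 0 := by positivity
      have hf : ((s:ℝ)+1/2)^2 * (2*((s:ℝ)+1)+1) * ((2*(s:ℝ)+2)/(2*(s:ℝ)+1)*((2*(s:ℝ)+2)/(2*(s:ℝ)+3)))
          = (2*(s:ℝ)+1)*((s:ℝ)+1)^2 := by
        field_simp
        ring
      rw [e1, e2, Real.Wallis.W_succ]
      push_cast
      linear_combination ((s:ℝ)+1)^2 * ih + (Gamma ((s:ℝ)+1/2)^2 * Real.Wallis.W s) * hf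


lemma tendsto_A : Tendsto (fun s : ℕ => Gamma ((s:ℝ) + 1/2)^4 /
    ((s:ℝ) * ((s:ℝ) - 1/2) * Gamma (s:ℝ)^4)) atTop (𝓝 1) := by
  have hW := Real.Wallis.tendsto_W_nhds_pi_div_two
  have h1s : Tendsto (fun s : ℕ => 1/(s:ℝ)) atTop (𝓝 0) := tendsto_one_div_atTop_nhds_zero_nat
  have hden : Tendsto (fun s : ℕ =>
      (2 + 1/(s:ℝ))^2 * (1 - 1/(s:ℝ)/2) * (Real.Wallis.W s)^2) atTop (𝓝 (π^2)) := by
    have h := (((tendsto_const_nhds (x := (2:ℝ)) (f := atTop)).add h1s).pow 2).mul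
      ((tendsto_const_nhds (x := (1:ℝ))).sub (h1s.div_const 2)) |>.mul (hW.pow 2)
    convert h using 2
    rw [div_pow]
    ring
  have hπ2 : (π^2 : ℝ) ≠ 0 := by positivity
  have hF : Tendsto (fun s : ℕ => π^2 /
      ((2 + 1/(s:ℝ))^2 * (1 - 1/(s:ℝ)/2) * (Real.Wallis.W s)^2)) atTop (𝓝 1) := by
    have := (tendsto_const_nhds (x := (π^2:ℝ)) (f := atTop)).div hden hπ2
    simpa [div_self hπ2, Pi.div_def] using this
  apply hF.congr'
  filter_upwards [eventually_ge_atTop 1] with s hs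
  have hs0 : (0:ℝ) < (s:ℝ) := by exact_mod_cast hs
  have hs1 : (1:ℝ) ≤ (s:ℝ) := by exact_mod_cast hs
  have h := gamma_wallis s hs
  have hGh : 0 < Gamma ((s:ℝ) + 1/2) := Real.Gamma_pos_of_pos (by positivity)
  have hG : 0 < Gamma (s:ℝ) := Real.Gamma_pos_of_pos hs0
  have hWp : 0 < Real.Wallis.W s := Real.Wallis.W_pos s
  set W := Real.Wallis.W s with hWdef
  set G := Gamma (s:ℝ) with hGdef
  set Gh := Gamma ((s:ℝ) + 1/2) with hGhdef
  have hsm : (0:ℝ) < (s:ℝ) - 1/2 := by linarith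
  have hsq : Gh^4*(2*(s:ℝ)+1)^2*W^2 = π^2*(s:ℝ)^4*G^4 := by
    linear_combination (Gh^2*(2*(s:ℝ)+1)*W + π*(s:ℝ)^2*G^2) * h
  have hDne : (2 + 1/(s:ℝ))^2 * (1 - 1/(s:ℝ)/2) * W^2 ≠ 0 := by
    have h2 : (0:ℝ) < 2 + 1/(s:ℝ) := by positivity
    have h3 : (0:ℝ) < 1 - 1/(s:ℝ)/2 := by
      have : 1/(s:ℝ) ≤ 1 := by rw [div_le_one hs0]; exact hs1
      linarith
    positivity
  have hEne : (s:ℝ) * ((s:ℝ) - 1/2) * G^4 ≠ 0 := by positivity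
  rw [div_eq_div_iff hDne hEne]
  have hsne : (s:ℝ) ≠ 0 := ne_of_gt hs0
  field_simp
  linear_combination ((1:ℝ) - 2*(s:ℝ)) * hsq

lemma tendsto_B : Tendsto (fun s : ℕ => Gamma ((s:ℝ) + 1)^4 /
    ((((s:ℝ) + 1/2) * (s:ℝ)) * Gamma ((s:ℝ) + 1/2)^4)) atTop (𝓝 1) := by
  have hA := tendsto_A
  have h1s : Tendsto (fun s : ℕ => 1/(s:ℝ)^2) atTop (𝓝 0) := by
    simpa using ((tendsto_one_div_atTop_nhds_zero_nat : Tendsto (fun s : ℕ => 1/(s:ℝ)) atTop (𝓝 0)).pow 2)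
  have hrat : Tendsto (fun s : ℕ => 1/(1 - (1/(s:ℝ)^2)/4)) atTop (𝓝 1) := by
    have hd : Tendsto (fun s : ℕ => 1 - (1/(s:ℝ)^2)/4) atTop (𝓝 1) := by
      simpa using (tendsto_const_nhds (x := (1:ℝ)) (f := atTop)).sub (h1s.div_const 4)
    simpa [one_div] using hd.inv₀ one_ne_zero
  have hinv : Tendsto (fun s : ℕ => (Gamma ((s:ℝ) + 1/2)^4 /
      ((s:ℝ) * ((s:ℝ) - 1/2) * Gamma (s:ℝ)^4))⁻¹) atTop (𝓝 1) := by
    simpa using hA.inv₀ one_ne_zero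
  have hmul := hrat.mul hinv
  rw [mul_one] at hmul
  apply hmul.congr'
  filter_upwards [eventually_ge_atTop 1] with s hs
  have hs0 : (0:ℝ) < (s:ℝ) := by exact_mod_cast hs
  have hs1 : (1:ℝ) ≤ (s:ℝ) := by exact_mod_cast hs
  have hGh : 0 < Gamma ((s:ℝ) + 1/2) := Real.Gamma_pos_of_pos (by positivity)
  have hG : 0 < Gamma (s:ℝ) := Real.Gamma_pos_of_pos hs0
  have hsm : (0:ℝ) < (s:ℝ) - 1/2 := by linarith
  have e2 : Gamma ((s:ℝ) + 1) = (s:ℝ) * Gamma (s:ℝ) := Real.Gamma_add_one (ne_of_gt hs0)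
  set G := Gamma (s:ℝ) with hGdef
  set Gh := Gamma ((s:ℝ) + 1/2) with hGhdef
  have h14 : (0:ℝ) < 1 - 1/(s:ℝ)^2/4 := by
    have h15 : 1/(s:ℝ)^2 ≤ 1 := by
      rw [div_le_one (by positivity)]
      nlinarith
    linarith
  rw [e2, inv_div, div_mul_div_comm,
    div_eq_div_iff (by positivity) (by positivity : ((s:ℝ)+1/2) * (s:ℝ) * Gh^4 ≠ 0)]
  have hsne : (s:ℝ) ≠ 0 := ne_of_gt hs0
  field_simp
  ring


lemma key (j : ℕ) (hj : 2 ≤ j) :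
    (j:ℝ)/2 * ((j:ℝ)/2 - 1/2) * Gamma ((j:ℝ)/2) ^ 4 ≤ Gamma ((j:ℝ)/2 + 1/2) ^ 4 := by
  by_contra hlt
  push_neg at hlt
  set y := (j:ℝ)/2 with hydef
  have hy : (1:ℝ) ≤ y := by
    rw [hydef]
    have : (2:ℝ) ≤ (j:ℝ) := by exact_mod_cast hj
    linarith
  have hy0 : (0:ℝ) < y := by linarith
  have hym : (0:ℝ) < y - 1/2 := by linarith
  have hG : 0 < Gamma y := Real.Gamma_pos_of_pos hy0
  have hden : (0:ℝ) < y * (y - 1/2) * Gamma y ^ 4 := by positivity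
  set c := Gamma (y + 1/2) ^ 4 / (y * (y - 1/2) * Gamma y ^ 4) with hcdef
  have hc0 : 0 ≤ c := by
    apply div_nonneg _ hden.le
    positivity
  have hc1 : c < 1 := (div_lt_one hden).mpr hlt
  have hall : ∀ k : ℕ, Gamma (y + k + 1/2) ^ 4 ≤
      c * ((y + k) * ((y + k) - 1/2) * Gamma (y + k) ^ 4) := by
    intro k
    induction k with
    | zero =>
        simp only [Nat.cast_zero, add_zero]
        rw [hcdef, div_mul_cancel₀ _ (ne_of_gt hden)]
    | succ k ih =>
        have hyk : (1:ℝ) ≤ y + k := by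
          have : (0:ℝ) ≤ (k:ℝ) := Nat.cast_nonneg k
          linarith
        have := step_up hyk hc0 ih
        have harg : y + (↑(k+1):ℝ) = y + k + 1 := by push_cast; ring
        rw [harg]
        convert this using 3 <;> push_cast <;> ring
  -- tendsto of the ratio sequence
  have hQ : Tendsto (fun k : ℕ => Gamma (y + k + 1/2) ^ 4 /
      ((y + k) * ((y + k) - 1/2) * Gamma (y + k) ^ 4)) atTop (𝓝 1) := by
    rcases Nat.even_or_odd j with he | ho
    · obtain ⟨a, ha⟩ := he
      have ha1 : 1 ≤ a := by omega
      have hyeq : y = (a:ℝ) := by rw [hydef, ha]; push_cast; ring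
      have hcomp := tendsto_A.comp (tendsto_add_atTop_nat a)
      apply hcomp.congr
      intro k
      simp only [Function.comp_apply]
      rw [hyeq]
      push_cast
      ring_nf
    · obtain ⟨a, ha⟩ := ho
      have ha1 : 1 ≤ a := by omega
      have hyeq : y = (a:ℝ) + 1/2 := by rw [hydef, ha]; push_cast; ring
      have hcomp := tendsto_B.comp (tendsto_add_atTop_nat a)
      apply hcomp.congr
      intro k
      simp only [Function.comp_apply]
      rw [hyeq]
      push_cast
      ring_nf
  have hev := hQ.eventually (lt_mem_nhds hc1)
  obtain ⟨k, hk⟩ := hev.exists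
  have hyk0 : (0:ℝ) < y + k := by
    have : (0:ℝ) ≤ (k:ℝ) := Nat.cast_nonneg k
    linarith
  have hykm : (0:ℝ) < (y + k) - 1/2 := by
    have : (0:ℝ) ≤ (k:ℝ) := Nat.cast_nonneg k
    linarith
  have hGk : 0 < Gamma (y + k) := Real.Gamma_pos_of_pos hyk0
  have hdk : (0:ℝ) < (y + k) * ((y + k) - 1/2) * Gamma (y + k) ^ 4 := by positivity
  have : Gamma (y + k + 1/2) ^ 4 / ((y + k) * ((y + k) - 1/2) * Gamma (y + k) ^ 4) ≤ c :=
    (div_le_iff₀ hdk).mpr (hall k)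
  linarith

/-- the key inequality in the `φ(y+1/2) ≤ φ(y)` product form -/
lemma key' (j : ℕ) (hj : 2 ≤ j) :
    Gamma (((j:ℝ)+1)/2 - 1/2) * Gamma (((j:ℝ)+1)/2 + 1/2) * Gamma ((j:ℝ)/2) ^ 2 ≤
      Gamma ((j:ℝ)/2 - 1/2) * Gamma ((j:ℝ)/2 + 1/2) * Gamma (((j:ℝ)+1)/2) ^ 2 := by
  have hk := key j hj
  set y := (j:ℝ)/2 with hydef
  have hy : (1:ℝ) ≤ y := by
    rw [hydef]
    have : (2:ℝ) ≤ (j:ℝ) := by exact_mod_cast hj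
    linarith
  have hy0 : (0:ℝ) < y := by linarith
  have hym : (0:ℝ) < y - 1/2 := by linarith
  have e1 : ((j:ℝ)+1)/2 - 1/2 = y := by rw [hydef]; ring
  have e2 : ((j:ℝ)+1)/2 + 1/2 = y + 1 := by rw [hydef]; ring
  have e3 : ((j:ℝ)+1)/2 = y + 1/2 := by rw [hydef]; ring
  rw [e1, e2, e3]
  have eG1 : Gamma (y + 1) = y * Gamma y := Real.Gamma_add_one (ne_of_gt hy0)
  have eG2 : Gamma (y + 1/2) = (y - 1/2) * Gamma (y - 1/2) := by
    rw [show y + 1/2 = (y - 1/2) + 1 by ring, Real.Gamma_add_one (ne_of_gt hym)]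
  have hGm : 0 < Gamma (y - 1/2) := Real.Gamma_pos_of_pos hym
  have hG : 0 < Gamma y := Real.Gamma_pos_of_pos hy0
  rw [eG1]
  -- goal : Γy * (y Γy) * Γy² ≤ Γ(y−1/2)Γ(y+1/2)Γ(y+1/2)²
  -- from key : y(y−1/2)Γy⁴ ≤ Γ(y+1/2)⁴ = (y−1/2)Γ(y−1/2)Γ(y+1/2)³
  have h4 : Gamma (y + 1/2) ^ 4 = (y - 1/2) * (Gamma (y - 1/2) * Gamma (y + 1/2) * Gamma (y + 1/2) ^ 2) := by
    rw [show Gamma (y + 1/2) ^ 4 = Gamma (y + 1/2) * Gamma (y + 1/2) ^ 3 by ring]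
    nth_rewrite 1 [eG2]
    ring
  rw [h4] at hk
  have := (mul_le_mul_iff_right₀ hym).mp (by linarith : (y - 1/2) * (Gamma y * (y * Gamma y) * Gamma y ^ 2) ≤
    (y - 1/2) * (Gamma (y - 1/2) * Gamma (y + 1/2) * Gamma (y + 1/2) ^ 2))
  linarith

lemma main' (m : ℕ) : ∀ j : ℕ, 2 ≤ j →
    Gamma (((j:ℝ) + m)/2 - 1/2) * Gamma (((j:ℝ) + m)/2 + 1/2) * Gamma ((j:ℝ)/2) ^ 2 ≤
      Gamma ((j:ℝ)/2 - 1/2) * Gamma ((j:ℝ)/2 + 1/2) * Gamma (((j:ℝ) + m)/2) ^ 2 := by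
  induction m with
  | zero => intro j hj; simp
  | succ m ih =>
      intro j hj
      have H1 := ih (j+1) (by omega)
      have H2 := key' j hj
      have hj2 : (2:ℝ) ≤ (j:ℝ) := by exact_mod_cast hj
      have e1 : ((j:ℝ) + (m+1:ℕ))/2 = (((j+1:ℕ):ℝ) + m)/2 := by push_cast; ring
      rw [e1]
      have ew : (((j+1:ℕ):ℝ))/2 = ((j:ℝ)+1)/2 := by push_cast; ring
      rw [ew] at H1
      -- positivity of the middle factors
      have hw0 : (0:ℝ) < ((j:ℝ)+1)/2 - 1/2 := by linarith
      have hw1 : (0:ℝ) < ((j:ℝ)+1)/2 + 1/2 := by linarith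
      have hw2 : (0:ℝ) < ((j:ℝ)+1)/2 := by linarith
      have hWm : 0 < Gamma (((j:ℝ)+1)/2 - 1/2) := Real.Gamma_pos_of_pos hw0
      have hWp : 0 < Gamma (((j:ℝ)+1)/2 + 1/2) := Real.Gamma_pos_of_pos hw1
      have hW : 0 < Gamma (((j:ℝ)+1)/2) := Real.Gamma_pos_of_pos hw2
      have hv : 0 < Gamma ((j:ℝ)/2) := Real.Gamma_pos_of_pos (by linarith)
      have hz0 : (0:ℝ) < (((j+1:ℕ):ℝ) + m)/2 - 1/2 := by
        push_cast
        have : (0:ℝ) ≤ (m:ℝ) := Nat.cast_nonneg m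
        linarith
      have hz1 : (0:ℝ) < (((j+1:ℕ):ℝ) + m)/2 + 1/2 := by
        push_cast
        have : (0:ℝ) ≤ (m:ℝ) := Nat.cast_nonneg m
        linarith
      have hZm : 0 < Gamma ((((j+1:ℕ):ℝ) + m)/2 - 1/2) := Real.Gamma_pos_of_pos hz0
      have hZp : 0 < Gamma ((((j+1:ℕ):ℝ) + m)/2 + 1/2) := Real.Gamma_pos_of_pos hz1
      have hZ : 0 < Gamma ((((j+1:ℕ):ℝ) + m)/2) :=
        Real.Gamma_pos_of_pos (by push_cast; have : (0:ℝ) ≤ (m:ℝ) := Nat.cast_nonneg m; linarith)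
      -- multiply H1 by Γ(v)² and H2 by Γ(z)², chain, cancel Γ(w)² Γ(w−1/2) Γ(w+1/2)
      have hA := mul_le_mul_of_nonneg_right H1 (le_of_lt (by positivity :
        (0:ℝ) < Gamma ((j:ℝ)/2) ^ 2))
      have hB := mul_le_mul_of_nonneg_right H2 (le_of_lt (by positivity :
        (0:ℝ) < Gamma ((((j+1:ℕ):ℝ) + m)/2) ^ 2))
      have hchain : Gamma ((((j+1:ℕ):ℝ) + m)/2 - 1/2) * Gamma ((((j+1:ℕ):ℝ) + m)/2 + 1/2) *
            Gamma (((j:ℝ)+1)/2) ^ 2 * Gamma ((j:ℝ)/2) ^ 2 ≤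
          Gamma ((j:ℝ)/2 - 1/2) * Gamma ((j:ℝ)/2 + 1/2) * Gamma (((j:ℝ)+1)/2) ^ 2 *
            Gamma ((((j+1:ℕ):ℝ) + m)/2) ^ 2 := by
        calc Gamma ((((j+1:ℕ):ℝ) + m)/2 - 1/2) * Gamma ((((j+1:ℕ):ℝ) + m)/2 + 1/2) *
              Gamma (((j:ℝ)+1)/2) ^ 2 * Gamma ((j:ℝ)/2) ^ 2
            ≤ Gamma (((j:ℝ)+1)/2 - 1/2) * Gamma (((j:ℝ)+1)/2 + 1/2) *
              Gamma ((((j+1:ℕ):ℝ) + m)/2) ^ 2 * Gamma ((j:ℝ)/2) ^ 2 := hA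
          _ = (Gamma (((j:ℝ)+1)/2 - 1/2) * Gamma (((j:ℝ)+1)/2 + 1/2) * Gamma ((j:ℝ)/2) ^ 2) *
              Gamma ((((j+1:ℕ):ℝ) + m)/2) ^ 2 := by ring
          _ ≤ (Gamma ((j:ℝ)/2 - 1/2) * Gamma ((j:ℝ)/2 + 1/2) * Gamma (((j:ℝ)+1)/2) ^ 2) *
              Gamma ((((j+1:ℕ):ℝ) + m)/2) ^ 2 := hB
          _ = Gamma ((j:ℝ)/2 - 1/2) * Gamma ((j:ℝ)/2 + 1/2) * Gamma (((j:ℝ)+1)/2) ^ 2 *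
              Gamma ((((j+1:ℕ):ℝ) + m)/2) ^ 2 := by ring
      -- cancel Γ(w)² from both sides
      have hcan : (0:ℝ) < Gamma (((j:ℝ)+1)/2) ^ 2 := by positivity
      nlinarith [hchain, hcan, hZm.le, hZp.le, hv.le,
        mul_pos hZm hZp, mul_pos (mul_pos hZm hZp) hv]
  

end GLogAux

open GLogAux in
/-- For a fixed integer `m ≥ 1`, the sequence
`g_m(n) := Γ(n/2)·exp(n/m) / (Γ(m/2)·Γ((n−m)/2)·2^{n/2})` (for `n > m`)
is log-concave: `g_m(n)^2 ≥ g_m(n−1)·g_m(n+1)` for all `n ≥ m+2`. -/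
theorem g_log_concave (m : ℕ) (hm : 1 ≤ m)
    (g : ℕ → ℝ)
    (hg : ∀ n : ℕ, m < n →
      g n = Gamma ((n : ℝ) / 2) * Real.exp ((n : ℝ) / m) /
        (Gamma ((m : ℝ) / 2) * Gamma (((n : ℝ) - m) / 2) * 2 ^ ((n : ℝ) / 2)))
    (n : ℕ) (hn : m + 2 ≤ n) :
    g n ^ 2 ≥ g (n - 1) * g (n + 1) := by

  have h1 : m < n - 1 := by omega
  have h2 : m < n := by omega
  have h3 : m < n + 1 := by omega
  have hc1 : ((n - 1 : ℕ) : ℝ) = (n : ℝ) - 1 := by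
    have : (1:ℕ) ≤ n := by omega
    push_cast [this]
    ring
  have hc2 : ((n + 1 : ℕ) : ℝ) = (n : ℝ) + 1 := by push_cast; ring
  rw [ge_iff_le, hg (n-1) h1, hg n h2, hg (n+1) h3, hc1, hc2]
  -- basic numeric facts
  have hmr : (1:ℝ) ≤ (m:ℝ) := by exact_mod_cast hm
  have hnr : (m:ℝ) + 2 ≤ (n:ℝ) := by exact_mod_cast hn
  -- the central Gamma inequality
  have hj : 2 ≤ n - m := by omega
  have hkey := main' m (n - m) hj
  have hjc : ((n - m : ℕ) : ℝ) = (n:ℝ) - m := by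
    have : m ≤ n := by omega
    push_cast [this]
    ring
  rw [hjc] at hkey
  have ea1 : ((n:ℝ) - m + m)/2 - 1/2 = ((n:ℝ) - 1)/2 := by ring
  have ea2 : ((n:ℝ) - m + m)/2 + 1/2 = ((n:ℝ) + 1)/2 := by ring
  have ea3 : ((n:ℝ) - m + m)/2 = (n:ℝ)/2 := by ring
  have ea4 : ((n:ℝ) - m)/2 - 1/2 = ((n:ℝ) - 1 - m)/2 := by ring
  have ea5 : ((n:ℝ) - m)/2 + 1/2 = ((n:ℝ) + 1 - m)/2 := by ring
  rw [ea1, ea2, ea3, ea4, ea5] at hkey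
  -- hkey : Γ((n−1)/2) Γ((n+1)/2) Γ((n−m)/2)² ≤ Γ((n−1−m)/2) Γ((n+1−m)/2) Γ(n/2)²
  -- positivity facts
  have hΓa : 0 < Gamma (((n:ℝ) - 1)/2) := Real.Gamma_pos_of_pos (by linarith)
  have hΓb : 0 < Gamma (((n:ℝ) + 1)/2) := Real.Gamma_pos_of_pos (by linarith)
  have hΓn : 0 < Gamma ((n:ℝ)/2) := Real.Gamma_pos_of_pos (by linarith)
  have hGm : 0 < Gamma ((m:ℝ)/2) := Real.Gamma_pos_of_pos (by linarith)
  have hD : 0 < Gamma (((n:ℝ) - m)/2) := Real.Gamma_pos_of_pos (by linarith)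
  have hD1 : 0 < Gamma (((n:ℝ) - 1 - m)/2) := Real.Gamma_pos_of_pos (by linarith)
  have hD2 : 0 < Gamma (((n:ℝ) + 1 - m)/2) := Real.Gamma_pos_of_pos (by linarith)
  have hE1 : 0 < Real.exp (((n:ℝ) - 1)/m) := Real.exp_pos _
  have hE2 : 0 < Real.exp (((n:ℝ) + 1)/m) := Real.exp_pos _
  have hE : 0 < Real.exp ((n:ℝ)/m) := Real.exp_pos _
  have hP1 : (0:ℝ) < 2 ^ (((n:ℝ) - 1)/2) := Real.rpow_pos_of_pos two_pos _
  have hP2 : (0:ℝ) < 2 ^ (((n:ℝ) + 1)/2) := Real.rpow_pos_of_pos two_pos _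
  have hP : (0:ℝ) < 2 ^ ((n:ℝ)/2) := Real.rpow_pos_of_pos two_pos _
  -- exponential and power identities
  have hEe : Real.exp (((n:ℝ) - 1)/m) * Real.exp (((n:ℝ) + 1)/m) = Real.exp ((n:ℝ)/m) ^ 2 := by
    rw [← Real.exp_add, sq, ← Real.exp_add]
    congr 1
    field_simp
    ring
  have hPe : (2:ℝ) ^ (((n:ℝ) - 1)/2) * 2 ^ (((n:ℝ) + 1)/2) = ((2:ℝ) ^ ((n:ℝ)/2)) ^ 2 := by
    rw [sq, ← Real.rpow_add two_pos, ← Real.rpow_add two_pos]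
    congr 1
    ring
  rw [div_mul_div_comm, div_pow, div_le_div_iff₀
    (by positivity) (by positivity)]
  calc Gamma (((n:ℝ) - 1)/2) * Real.exp (((n:ℝ) - 1)/m) *
        (Gamma (((n:ℝ) + 1)/2) * Real.exp (((n:ℝ) + 1)/m)) *
        (Gamma ((m:ℝ)/2) * Gamma (((n:ℝ) - m)/2) * 2 ^ ((n:ℝ)/2)) ^ 2
      = (Gamma (((n:ℝ) - 1)/2) * Gamma (((n:ℝ) + 1)/2) * Gamma (((n:ℝ) - m)/2) ^ 2) *
        (Gamma ((m:ℝ)/2) ^ 2 * (Real.exp (((n:ℝ) - 1)/m) * Real.exp (((n:ℝ) + 1)/m)) *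
          ((2:ℝ) ^ ((n:ℝ)/2)) ^ 2) := by ring
    _ = (Gamma (((n:ℝ) - 1)/2) * Gamma (((n:ℝ) + 1)/2) * Gamma (((n:ℝ) - m)/2) ^ 2) *
        (Gamma ((m:ℝ)/2) ^ 2 * Real.exp ((n:ℝ)/m) ^ 2 *
          ((2:ℝ) ^ (((n:ℝ) - 1)/2) * 2 ^ (((n:ℝ) + 1)/2))) := by rw [hEe, hPe]
    _ ≤ (Gamma (((n:ℝ) - 1 - m)/2) * Gamma (((n:ℝ) + 1 - m)/2) * Gamma ((n:ℝ)/2) ^ 2) *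
        (Gamma ((m:ℝ)/2) ^ 2 * Real.exp ((n:ℝ)/m) ^ 2 *
          ((2:ℝ) ^ (((n:ℝ) - 1)/2) * 2 ^ (((n:ℝ) + 1)/2))) := by
        apply mul_le_mul_of_nonneg_right hkey
        positivity
    _ = (Gamma ((n:ℝ)/2) * Real.exp ((n:ℝ)/m)) ^ 2 *
        (Gamma ((m:ℝ)/2) * Gamma (((n:ℝ) - 1 - m)/2) * 2 ^ (((n:ℝ) - 1)/2) *
          (Gamma ((m:ℝ)/2) * Gamma (((n:ℝ) + 1 - m)/2) * 2 ^ (((n:ℝ) + 1)/2))) := by ring
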